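/- The second derivative of W_M with respect to x is strictly positive at every x ∈ [0,ρ]; in particular W_M is strictly convex on [0,ρ], so the relation between the mixed gated/exhaustive mean low-priority waiting time and the high-priority arrival intensity is not a straight line. -/

import Mathlib

/-- Gated mean low-priority waiting time, as a function of the
high-priority occupation rate `x`, with total occupation rate `ρ`
and deterministic vacation length `S`. -/
noncomputable def WG (ρ S x : ℝ) : ℝ :=
  (1 + ρ + x) * (S / (2 * (1 - ρ)) + ρ / (1 - ρ ^ 2))

/-- Mixed gated/exhaustive mean low-priority waiting time, as a function
of the high-priority occupation rate `x`. -/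
noncomputable def WM (ρ S x : ℝ) : ℝ :=
  ρ / ((1 - ρ) * (1 - x)) + S * (1 + ρ * (1 - 2 * x)) / (2 * (1 - ρ) * (1 - x))

/-- the second derivative of W_M is strictly positive at every
x ∈ [0,ρ]; in particular W_M is strictly convex on [0,ρ], so it is not affine. -/
theorem deriv2_WM_pos (ρ S : ℝ) (hρ0 : 0 < ρ) (hρ1 : ρ < 1) (hS : 0 < S) :
    (∀ x ∈ Set.Icc (0 : ℝ) ρ, 0 < deriv (deriv (WM ρ S)) x) ∧
    StrictConvexOn ℝ (Set.Icc (0 : ℝ) ρ) (WM ρ S) ∧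
    ¬ ∃ c₀ c₁ : ℝ, ∀ x ∈ Set.Icc (0 : ℝ) ρ, WM ρ S x = c₀ + c₁ * x := by
  have h1ρ : (1:ℝ) - ρ ≠ 0 := by linarith
  set C : ℝ := ρ / (1 - ρ) + S / 2 with hC
  set D : ℝ := S * ρ / (1 - ρ) with hD
  have hCpos : 0 < C := by
    rw [hC]
    have : 0 < ρ / (1 - ρ) := div_pos hρ0 (by linarith)
    linarith
  -- WM equals a simple function on (-∞, 1)
  have key : ∀ x ∈ Set.Iio (1:ℝ), WM ρ S x = C * (1 - x)⁻¹ + D := by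
    intro x hx
    have hx1 : (1:ℝ) - x ≠ 0 := by
      have : x < 1 := hx
      linarith
    unfold WM
    rw [hC, hD]
    field_simp
    ring
  -- first derivative on (-∞, 1)
  have hderiv : ∀ x ∈ Set.Iio (1:ℝ), deriv (WM ρ S) x = C * ((1 - x) ^ 2)⁻¹ := by
    intro x hx
    have hx1 : (1:ℝ) - x ≠ 0 := by
      have : x < 1 := hx; linarith
    have h0 : HasDerivAt (fun y : ℝ => 1 - y) (-1) x := (hasDerivAt_id x).const_sub 1
    have hg : HasDerivAt (fun y : ℝ => C * (1 - y)⁻¹ + D) (C * ((1 - x) ^ 2)⁻¹) x := by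
      have h1 := (h0.inv hx1).const_mul C
      refine (h1.add_const D).congr_deriv ?_
      field_simp
    have heq : WM ρ S =ᶠ[nhds x] fun y => C * (1 - y)⁻¹ + D :=
      Filter.eventuallyEq_of_mem (Iio_mem_nhds hx) (fun y hy => key y hy)
    rw [heq.deriv_eq]
    exact hg.deriv
  -- second derivative on (-∞, 1)
  have hderiv2 : ∀ x ∈ Set.Iio (1:ℝ), deriv (deriv (WM ρ S)) x = 2 * C * ((1 - x) ^ 3)⁻¹ := by
    intro x hx
    have hx1 : (1:ℝ) - x ≠ 0 := by
      have : x < 1 := hx; linarith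
    have h0 : HasDerivAt (fun y : ℝ => 1 - y) (-1) x := (hasDerivAt_id x).const_sub 1
    have hsq : HasDerivAt (fun y : ℝ => (1 - y) ^ 2) (2 * (1 - x) ^ 1 * (-1)) x := by
      simpa using h0.fun_pow 2
    have hg : HasDerivAt (fun y : ℝ => C * ((1 - y) ^ 2)⁻¹) (2 * C * ((1 - x) ^ 3)⁻¹) x := by
      have h1 := (hsq.inv (pow_ne_zero 2 hx1)).const_mul C
      refine h1.congr_deriv ?_
      field_simp
    have heq : deriv (WM ρ S) =ᶠ[nhds x] fun y => C * ((1 - y) ^ 2)⁻¹ :=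
      Filter.eventuallyEq_of_mem (Iio_mem_nhds hx) (fun y hy => hderiv y hy)
    rw [heq.deriv_eq]
    exact hg.deriv
  have hpos : ∀ x ∈ Set.Icc (0:ℝ) ρ, 0 < deriv (deriv (WM ρ S)) x := by
    intro x hx
    have hx1 : x < 1 := lt_of_le_of_lt hx.2 hρ1
    rw [hderiv2 x hx1]
    have : (0:ℝ) < 1 - x := by linarith
    positivity
  have hconv : StrictConvexOn ℝ (Set.Icc (0:ℝ) ρ) (WM ρ S) := by
    apply strictConvexOn_of_deriv2_pos (convex_Icc 0 ρ)
    · apply ContinuousOn.congr (f := fun x => C * (1 - x)⁻¹ + D)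
      · apply ContinuousOn.add _ continuousOn_const
        apply ContinuousOn.mul continuousOn_const
        apply ContinuousOn.inv₀ (by fun_prop)
        intro x hx
        have : x < 1 := lt_of_le_of_lt hx.2 hρ1
        intro h
        linarith
      · intro x hx
        exact key x (lt_of_le_of_lt hx.2 hρ1)
    · intro x hx
      rw [interior_Icc] at hx
      exact hpos x ⟨le_of_lt hx.1, le_of_lt hx.2⟩
  refine ⟨hpos, hconv, ?_⟩
  rintro ⟨c₀, c₁, h⟩
  have h0 : (0:ℝ) ∈ Set.Icc (0:ℝ) ρ := ⟨le_refl _, le_of_lt hρ0⟩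
  have hρm : ρ ∈ Set.Icc (0:ℝ) ρ := ⟨le_of_lt hρ0, le_refl _⟩
  have hmid : ρ / 2 ∈ Set.Icc (0:ℝ) ρ := ⟨by linarith, by linarith⟩
  have key2 := hconv.2 h0 hρm hρ0.ne
    (by norm_num : (0:ℝ) < 1/2) (by norm_num : (0:ℝ) < 1/2) (by norm_num)
  simp only [smul_eq_mul] at key2
  rw [h _ h0, h _ hρm] at key2
  have hmid' : (1/2 : ℝ) * 0 + 1/2 * ρ = ρ / 2 := by ring
  rw [hmid', h _ hmid] at key2
  linarith
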